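/- In the unconditional independent model, the FDR of the linear step-up (Benjamini–Hochberg) procedure with threshold tₖ = αk/m equals π₀α, for any π₀ ∈ [0,1] and any continuous alternative c.d.f. F₁. -/

import Mathlib

open MeasureTheory Finset
open scoped Classical

noncomputable def unifM : Measure ℝ := volume.restrict (Set.Ioo (0:ℝ) 1)

noncomputable def iidUnif (k : ℕ) : Measure (Fin k → ℝ) := Measure.pi fun _ => unifM

/-- `Psi k t` is the probability that the order statistics `U_(1) ≤ ... ≤ U_(k)` of
`k` i.i.d. uniform variables on `(0,1)` satisfy `U_(j) ≤ t j` for all `1 ≤ j ≤ k`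
(1-indexed thresholds), expressed via the counting characterization
`U_(j) ≤ s ↔ #{i : U i ≤ s} ≥ j`. By convention `Psi 0 t = 1`. -/
noncomputable def Psi (k : ℕ) (t : ℕ → ℝ) : ℝ :=
  (iidUnif k {x | ∀ j ∈ Finset.Icc 1 k,
    j ≤ (Finset.univ.filter (fun i : Fin k => x i ≤ t j)).card}).toReal

/-- Rejection number of the step-up procedure with threshold `t` (1-indexed, `t 0 = 0`
by convention) applied to the `p`-values `p : Fin m → ℝ`:
the largest `k ≤ m` such that at least `k` of the `p`-values are `≤ t k`. -/
noncomputable def kSUf (m : ℕ) (t : ℕ → ℝ) (p : Fin m → ℝ) : ℕ :=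
  Nat.findGreatest (fun k => k ≤ (Finset.univ.filter (fun i : Fin m => p i ≤ t k)).card) m

/-- The set of hypotheses rejected by the step-up procedure. -/
noncomputable def rejSUf (m : ℕ) (t : ℕ → ℝ) (p : Fin m → ℝ) : Finset (Fin m) :=
  Finset.univ.filter (fun i => p i ≤ t (kSUf m t p))

/-- Rejection number of the step-down procedure with threshold `t` applied to `p`:
the largest `k ≤ m` such that for all `k' ≤ k` at least `k'` of the `p`-values are `≤ t k'`. -/
noncomputable def kSDf (m : ℕ) (t : ℕ → ℝ) (p : Fin m → ℝ) : ℕ :=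
  Nat.findGreatest
    (fun k => ∀ k' ∈ Finset.Icc 1 k,
      k' ≤ (Finset.univ.filter (fun i : Fin m => p i ≤ t k')).card) m

/-- The set of hypotheses rejected by the step-down procedure. -/
noncomputable def rejSDf (m : ℕ) (t : ℕ → ℝ) (p : Fin m → ℝ) : Finset (Fin m) :=
  Finset.univ.filter (fun i => p i ≤ t (kSDf m t p))

/-- Per-coordinate law of `(Hᵢ, pᵢ)` in the unconditional independent model:
with probability `π₀` the null holds (`Hᵢ = false`) and `pᵢ` is uniform on `(0,1)`;
with probability `1 - π₀` the alternative holds (`Hᵢ = true`) and `pᵢ ∼ μ1`. -/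
noncomputable def coordM (pi0 : ℝ) (μ1 : Measure ℝ) : Measure (Bool × ℝ) :=
  (ENNReal.ofReal pi0) • ((Measure.dirac false).prod unifM)
    + (ENNReal.ofReal (1 - pi0)) • ((Measure.dirac true).prod μ1)

/-- The unconditional independent model: `m` i.i.d. copies of `(Hᵢ, pᵢ)`. -/
noncomputable def modelM (m : ℕ) (pi0 : ℝ) (μ1 : Measure ℝ) : Measure (Fin m → Bool × ℝ) :=
  Measure.pi fun _ => coordM pi0 μ1

/-- The `p`-value family of an outcome `ω`. -/
noncomputable def pvals (m : ℕ) (ω : Fin m → Bool × ℝ) : Fin m → ℝ := fun i => (ω i).2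

/-- Number of true null hypotheses rejected by the step-up procedure. -/
noncomputable def V0SU (m : ℕ) (t : ℕ → ℝ) (ω : Fin m → Bool × ℝ) : ℕ :=
  ((rejSUf m t (pvals m ω)).filter (fun i => (ω i).1 = false)).card

/-- Number of true null hypotheses rejected by the step-down procedure. -/
noncomputable def V0SD (m : ℕ) (t : ℕ → ℝ) (ω : Fin m → Bool × ℝ) : ℕ :=
  ((rejSDf m t (pvals m ω)).filter (fun i => (ω i).1 = false)).card


/-! ### Auxiliary lemmas for the FDR computation -/

section Aux

variable {m : ℕ} {t : ℕ → ℝ} {p : Fin m → ℝ}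

/-- count of p-values below `s` -/
noncomputable def Ncnt (m : ℕ) (p : Fin m → ℝ) (s : ℝ) : ℕ :=
  (Finset.univ.filter (fun i : Fin m => p i ≤ s)).card

lemma Ncnt_mono (p : Fin m → ℝ) {s s' : ℝ} (h : s ≤ s') : Ncnt m p s ≤ Ncnt m p s' := by
  apply Finset.card_le_card
  intro i hi
  simp only [Finset.mem_filter, Finset.mem_univ, true_and] at *
  linarith

lemma Ncnt_le (p : Fin m → ℝ) (s : ℝ) : Ncnt m p s ≤ m := by
  simpa [Ncnt] using Finset.card_filter_le Finset.univ (fun i : Fin m => p i ≤ s)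

lemma kSUf_le : kSUf m t p ≤ m := Nat.findGreatest_le m

lemma kSUf_spec (hpos : kSUf m t p ≠ 0) : kSUf m t p ≤ Ncnt m p (t (kSUf m t p)) :=
  Nat.findGreatest_of_ne_zero (P := fun k => k ≤ Ncnt m p (t k)) (n := m) rfl hpos

lemma le_kSUf {k : ℕ} (hk : k ≤ m) (h : k ≤ Ncnt m p (t k)) : k ≤ kSUf m t p :=
  Nat.le_findGreatest (P := fun k => k ≤ Ncnt m p (t k)) hk h

lemma kSUf_greatest {k : ℕ} (hk : kSUf m t p < k) (hkm : k ≤ m) : ¬ (k ≤ Ncnt m p (t k)) :=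
  Nat.findGreatest_is_greatest (P := fun k => k ≤ Ncnt m p (t k)) hk hkm

lemma card_rejSUf (hmono : Monotone t) :
    (rejSUf m t p).card = kSUf m t p := by
  have hR : (rejSUf m t p).card = Ncnt m p (t (kSUf m t p)) := rfl
  rcases Nat.eq_zero_or_pos (kSUf m t p) with h0 | hpos
  · rw [hR, h0]
    rcases Nat.eq_zero_or_pos m with hm | hm
    · subst hm; simp [Ncnt]
    · have h1 : ¬ (1 ≤ Ncnt m p (t 1)) := by
        intro h
        have := le_kSUf hm h
        omega
      have : Ncnt m p (t 0) ≤ Ncnt m p (t 1) := Ncnt_mono p (hmono (by omega))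
      omega
  · have hspec : kSUf m t p ≤ Ncnt m p (t (kSUf m t p)) := kSUf_spec (by omega)
    rw [hR]
    by_contra hne
    set r := Ncnt m p (t (kSUf m t p)) with hr
    have hlt : kSUf m t p < r := by omega
    have hrm : r ≤ m := Ncnt_le p _
    have hprop : r ≤ Ncnt m p (t r) := by
      have := Ncnt_mono p (hmono (le_of_lt hlt))
      omega
    exact kSUf_greatest hlt hrm hprop

lemma one_le_kSUf_of_mem {i : Fin m} (hmono : Monotone t)
    (hi : p i ≤ t (kSUf m t p)) : 1 ≤ kSUf m t p := by
  rcases Nat.eq_zero_or_pos (kSUf m t p) with h0 | hpos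
  · exfalso
    have hm : 1 ≤ m := by
      have := i.pos
      omega
    have hi1 : p i ≤ t 1 := le_trans hi (by rw [h0]; exact hmono (by omega))
    have : 1 ≤ Ncnt m p (t 1) := by
      rw [Ncnt]
      apply Finset.card_pos.mpr
      exact ⟨i, by simp [hi1]⟩
    have := le_kSUf hm this
    omega
  · omega

lemma Ncnt_update_eq {i : Fin m} {s : ℝ} (hpi : p i ≤ s) (hs : 0 ≤ s) :
    Ncnt m (Function.update p i 0) s = Ncnt m p s := by
  unfold Ncnt
  congr 1
  apply Finset.filter_congr
  intro j _
  rcases eq_or_ne j i with rfl | hne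
  · simp [Function.update_self, hpi, hs]
  · simp [Function.update_of_ne hne]

lemma Ncnt_le_update {i : Fin m} {s : ℝ} (hs : 0 ≤ s) :
    Ncnt m p s ≤ Ncnt m (Function.update p i 0) s := by
  by_cases hpi : p i ≤ s
  · rw [Ncnt_update_eq hpi hs]
  · apply Finset.card_le_card
    intro j hj
    simp only [Finset.mem_filter, Finset.mem_univ, true_and] at *
    rcases eq_or_ne j i with rfl | hne
    · exact absurd hj hpi
    · rwa [Function.update_of_ne hne]

/-- the switching lemma -/
lemma switch {i : Fin m} {k : ℕ} (hmono : Monotone t) (hnn : ∀ j, 0 ≤ t j)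
    (hk1 : 1 ≤ k) (hkm : k ≤ m) :
    (p i ≤ t (kSUf m t p) ∧ kSUf m t p = k) ↔
      (p i ≤ t k ∧ kSUf m t (Function.update p i 0) = k) := by
  set q := Function.update p i 0 with hq
  constructor
  · rintro ⟨hpi, hkeq⟩
    rw [hkeq] at hpi
    refine ⟨hpi, ?_⟩
    have h1 : k ≤ Ncnt m q (t k) := by
      rw [hq, Ncnt_update_eq hpi (hnn k)]
      have := kSUf_spec (t := t) (p := p) (by rw [hkeq]; omega)
      rw [hkeq] at this; exact this
    have hge : k ≤ kSUf m t q := le_kSUf hkm h1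
    rcases Nat.lt_or_ge k (kSUf m t q) with hlt | hle
    · exfalso
      set k' := kSUf m t q with hk'
      have hk'm : k' ≤ m := kSUf_le
      have hspec' : k' ≤ Ncnt m q (t k') := kSUf_spec (t := t) (by omega)
      have hpik' : p i ≤ t k' := le_trans hpi (hmono (le_of_lt hlt))
      have : k' ≤ Ncnt m p (t k') := by
        rw [← Ncnt_update_eq hpik' (hnn k')]; exact hspec'
      have := kSUf_greatest (t := t) (p := p) (by omega) hk'm
      exact this ‹k' ≤ Ncnt m p (t k')›
    · omega
  · rintro ⟨hpi, hkeq⟩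
    have h1 : k ≤ Ncnt m p (t k) := by
      rw [← Ncnt_update_eq hpi (hnn k), ← hq]
      have := kSUf_spec (t := t) (p := q) (by rw [hkeq]; omega)
      rw [hkeq] at this; exact this
    have hge : k ≤ kSUf m t p := le_kSUf hkm h1
    have heq : kSUf m t p = k := by
      rcases Nat.lt_or_ge k (kSUf m t p) with hlt | hle
      · exfalso
        set k'' := kSUf m t p with hk''
        have hk''m : k'' ≤ m := kSUf_le
        have hspec'' : k'' ≤ Ncnt m p (t k'') := kSUf_spec (t := t) (by omega)
        have : k'' ≤ Ncnt m q (t k'') := le_trans hspec'' (Ncnt_le_update (hnn k''))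
        have := kSUf_greatest (t := t) (p := q) (by rw [hkeq]; omega) hk''m
        exact this ‹k'' ≤ Ncnt m q (t k'')›
      · omega
    exact ⟨heq ▸ hpi, heq⟩

lemma kSUf_update_mem {i : Fin m} (hm : 1 ≤ m) (hnn : 0 ≤ t 1) :
    kSUf m t (Function.update p i 0) ∈ Finset.Icc 1 m := by
  rw [Finset.mem_Icc]
  refine ⟨?_, kSUf_le⟩
  apply le_kSUf hm
  rw [Ncnt]
  apply Finset.card_pos.mpr
  exact ⟨i, by simp [Function.update_self, hnn]⟩

end Aux

/-- the event: hypothesis `i` is a true null, `p_i ≤ t k`, and the step-up procedure on the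
`p`-values with `p_i` replaced by `0` rejects exactly `k` hypotheses. -/
def Sset (m : ℕ) (t : ℕ → ℝ) (i : Fin m) (k : ℕ) : Set (Fin m → Bool × ℝ) :=
  {ω | ((ω i).1 = false ∧ (ω i).2 ≤ t k) ∧ kSUf m t (Function.update (pvals m ω) i 0) = k}

section PW

variable {m : ℕ} {t : ℕ → ℝ}

lemma claim_i (hmono : Monotone t) (hnn : ∀ j, 0 ≤ t j) (ω : Fin m → Bool × ℝ) (i : Fin m) :
    (if ((ω i).1 = false ∧ pvals m ω i ≤ t (kSUf m t (pvals m ω))) then (1:ℝ) else 0)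
        / max ((kSUf m t (pvals m ω) : ℝ)) 1
      = ∑ k ∈ Finset.Icc 1 m, Set.indicator (Sset m t i k) (fun _ => (1:ℝ)/k) ω := by
  set p := pvals m ω with hp
  set K := kSUf m t p with hK
  by_cases hc : (ω i).1 = false ∧ p i ≤ t K
  · have hK1 : 1 ≤ K := one_le_kSUf_of_mem hmono hc.2
    have hKm : K ≤ m := kSUf_le
    have hmax : max ((K:ℝ)) 1 = K := by
      apply max_eq_left
      exact_mod_cast hK1
    rw [if_pos hc, hmax]
    have hmem : ω ∈ Sset m t i K := by
      have := (switch (p := p) (i := i) hmono hnn hK1 hKm).mp ⟨hc.2, rfl⟩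
      exact ⟨⟨hc.1, this.1⟩, this.2⟩
    rw [Finset.sum_eq_single K]
    · rw [Set.indicator_of_mem hmem]
    · intro k hk hne
      apply Set.indicator_of_notMem
      intro hmem'
      rw [Finset.mem_Icc] at hk
      have := (switch (p := p) (i := i) hmono hnn hk.1 hk.2).mpr ⟨hmem'.1.2, hmem'.2⟩
      exact hne this.2.symm
    · intro hKmem
      exact absurd (Finset.mem_Icc.mpr ⟨hK1, hKm⟩) hKmem
  · rw [if_neg hc, zero_div]
    symm
    apply Finset.sum_eq_zero
    intro k hk
    apply Set.indicator_of_notMem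
    intro hmem'
    rw [Finset.mem_Icc] at hk
    have := (switch (p := p) (i := i) hmono hnn hk.1 hk.2).mpr ⟨hmem'.1.2, hmem'.2⟩
    exact hc ⟨hmem'.1.1, this.1⟩

lemma pointwise_FDP (hmono : Monotone t) (hnn : ∀ j, 0 ≤ t j) (ω : Fin m → Bool × ℝ) :
    (V0SU m t ω : ℝ) / max ((rejSUf m t (pvals m ω)).card : ℝ) 1
      = ∑ i : Fin m, ∑ k ∈ Finset.Icc 1 m,
          Set.indicator (Sset m t i k) (fun _ => (1:ℝ)/k) ω := by
  set p := pvals m ω with hp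
  set K := kSUf m t p with hK
  have hcard : ((rejSUf m t p).card : ℝ) = (K : ℝ) := by
    rw [card_rejSUf (p := p) hmono]
  have hV : (V0SU m t ω : ℝ)
      = ∑ i : Fin m, if ((ω i).1 = false ∧ p i ≤ t K) then (1:ℝ) else 0 := by
    rw [V0SU, rejSUf, Finset.filter_filter]
    rw [Finset.card_filter]
    push_cast
    apply Finset.sum_congr rfl
    intro i _
    by_cases h : p i ≤ t K ∧ (ω i).1 = false
    · rw [if_pos h, if_pos ⟨h.2, h.1⟩]
    · rw [if_neg h, if_neg (fun hc => h ⟨hc.2, hc.1⟩)]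
  rw [hcard, hV, Finset.sum_div]
  apply Finset.sum_congr rfl
  intro i _
  exact claim_i hmono hnn ω i

end PW

section Meas

variable {m : ℕ} (t : ℕ → ℝ) (i : Fin m)

lemma measurable_updCnt (s : ℝ) :
    Measurable (fun ω : Fin m → Bool × ℝ =>
      (Finset.univ.filter (fun j : Fin m => Function.update (pvals m ω) i 0 j ≤ s)).card) := by
  have hrw : ∀ ω : Fin m → Bool × ℝ,
      (Finset.univ.filter (fun j : Fin m => Function.update (pvals m ω) i 0 j ≤ s)).card
      = ∑ j : Fin m, if Function.update (pvals m ω) i 0 j ≤ s then 1 else 0 := by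
    intro ω; rw [Finset.card_filter]
  simp_rw [hrw]
  apply Finset.measurable_sum
  intro j _
  have hj : Measurable (fun ω : Fin m → Bool × ℝ => Function.update (pvals m ω) i 0 j) := by
    rcases eq_or_ne j i with rfl | hne
    · simpa [Function.update_self] using (measurable_const : Measurable (fun _ : Fin m → Bool × ℝ => (0:ℝ)))
    · simp_rw [Function.update_of_ne hne]
      exact measurable_snd.comp (measurable_pi_apply j)
  exact Measurable.ite (measurableSet_le hj measurable_const) measurable_const measurable_const

lemma measurable_G :
    Measurable (fun ω : Fin m → Bool × ℝ => kSUf m t (Function.update (pvals m ω) i 0)) := by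
  unfold kSUf
  apply measurable_findGreatest
  intro k _
  have hm := measurable_updCnt (m := m) i (t k)
  exact hm (MeasurableSpace.measurableSet_top (s := Set.Ici k))

lemma measurableSet_Sset (k : ℕ) : MeasurableSet (Sset m t i k) := by
  have h1 : MeasurableSet {y : Bool × ℝ | y.1 = false ∧ y.2 ≤ t k} := by
    have hset : {y : Bool × ℝ | y.1 = false ∧ y.2 ≤ t k}
        = (Prod.fst ⁻¹' ({false} : Set Bool)) ∩ (Prod.snd ⁻¹' Set.Iic (t k)) := rfl
    rw [hset]
    exact ((measurableSet_singleton false).preimage measurable_fst).inter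
      (measurableSet_Iic.preimage measurable_snd)
  have h2 : MeasurableSet ((fun ω : Fin m → Bool × ℝ =>
      kSUf m t (Function.update (pvals m ω) i 0)) ⁻¹' {k}) :=
    (measurable_G t i) (measurableSet_singleton k)
  have hset2 : Sset m t i k
      = ((fun ω : Fin m → Bool × ℝ => ω i) ⁻¹' {y | y.1 = false ∧ y.2 ≤ t k})
        ∩ ((fun ω : Fin m → Bool × ℝ => kSUf m t (Function.update (pvals m ω) i 0)) ⁻¹' {k}) := rfl
  rw [hset2]
  exact (h1.preimage (measurable_pi_apply i)).inter h2

end Meas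

instance : IsProbabilityMeasure unifM := by
  constructor
  rw [unifM, Measure.restrict_apply MeasurableSet.univ, Set.univ_inter, Real.volume_Ioo]
  norm_num

lemma coordM_prob {pi0 : ℝ} (h0 : 0 ≤ pi0) (h1 : pi0 ≤ 1) (μ1 : Measure ℝ)
    [IsProbabilityMeasure μ1] : IsProbabilityMeasure (coordM pi0 μ1) := by
  constructor
  rw [coordM, Measure.add_apply, Measure.smul_apply, Measure.smul_apply,
    measure_univ, measure_univ]
  simp only [smul_eq_mul, mul_one]
  rw [← ENNReal.ofReal_add h0 (by linarith)]
  norm_num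

lemma unifM_Iic {c : ℝ} (h0 : 0 < c) (h1 : c < 1) : unifM (Set.Iic c) = ENNReal.ofReal c := by
  rw [unifM, Measure.restrict_apply measurableSet_Iic]
  have hset : Set.Iic c ∩ Set.Ioo 0 1 = Set.Ioc 0 c := by
    ext x
    simp only [Set.mem_inter_iff, Set.mem_Iic, Set.mem_Ioo, Set.mem_Ioc]
    constructor
    · rintro ⟨h, h2, h3⟩; exact ⟨h2, h⟩
    · rintro ⟨h2, h⟩; exact ⟨h, h2, by linarith⟩
  rw [hset, Real.volume_Ioc]
  norm_num

lemma coordM_false_Iic {pi0 c : ℝ} (μ1 : Measure ℝ) [IsProbabilityMeasure μ1]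
    (h0 : 0 < c) (h1 : c < 1) :
    coordM pi0 μ1 {y : Bool × ℝ | y.1 = false ∧ y.2 ≤ c}
      = ENNReal.ofReal pi0 * ENNReal.ofReal c := by
  have hset : {y : Bool × ℝ | y.1 = false ∧ y.2 ≤ c} = ({false} : Set Bool) ×ˢ Set.Iic c := by
    ext y
    rw [Set.mem_prod]
    simp
  rw [coordM, hset, Measure.add_apply, Measure.smul_apply, Measure.smul_apply,
    Measure.prod_prod, Measure.prod_prod, unifM_Iic h0 h1]
  simp [Measure.dirac_apply]

section Split

variable {n : ℕ} (t : ℕ → ℝ) (pi0 : ℝ) (μ1 : Measure ℝ)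

/-- the leave-one-out rejection number, as a function of the other coordinates -/
noncomputable def Gout (t : ℕ → ℝ) (i : Fin (n+1)) (z : Fin n → Bool × ℝ) : ℕ :=
  kSUf (n+1) t (Function.update (pvals (n+1) (i.insertNth ((false, (0:ℝ))) z)) i 0)

lemma update_insertNth_eq (i : Fin (n+1)) (y : Bool × ℝ) (z : Fin n → Bool × ℝ) :
    Function.update (pvals (n+1) (i.insertNth y z)) i 0
      = Function.update (pvals (n+1) (i.insertNth ((false, (0:ℝ))) z)) i 0 := by
  funext j
  rcases eq_or_ne j i with rfl | hne
  · rw [Function.update_self, Function.update_self]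
  · rw [Function.update_of_ne hne, Function.update_of_ne hne]
    obtain ⟨l, rfl⟩ := Fin.exists_succAbove_eq hne
    simp [pvals, Fin.insertNth_apply_succAbove]

lemma measurable_Gout (i : Fin (n+1)) : Measurable (Gout t i) := by
  have h1 : Measurable (fun z : Fin n → Bool × ℝ =>
      (i.insertNth ((false, (0:ℝ))) z : Fin (n+1) → Bool × ℝ)) := by
    have heq : (fun z : Fin n → Bool × ℝ =>
          (i.insertNth ((false, (0:ℝ))) z : Fin (n+1) → Bool × ℝ))
        = fun z => (MeasurableEquiv.piFinSuccAbove (fun _ : Fin (n+1) => Bool × ℝ) i).symm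
            (((false, (0:ℝ))), z) := by
      funext z
      simp [MeasurableEquiv.piFinSuccAbove_symm_apply, Fin.insertNthEquiv]
    rw [heq]
    exact (MeasurableEquiv.piFinSuccAbove (fun _ : Fin (n+1) => Bool × ℝ) i).symm.measurable.comp
      (measurable_const.prodMk measurable_id)
  exact (measurable_G t i).comp h1

lemma measure_Sset_eq [IsProbabilityMeasure μ1] [IsProbabilityMeasure (coordM pi0 μ1)]
    (i : Fin (n+1)) (k : ℕ) (h0 : 0 < t k) (h1 : t k < 1) :
    modelM (n+1) pi0 μ1 (Sset (n+1) t i k)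
      = ENNReal.ofReal pi0 * ENNReal.ofReal (t k)
        * (Measure.pi fun _ : Fin n => coordM pi0 μ1) (Gout t i ⁻¹' {k}) := by
  set ν := coordM pi0 μ1 with hν
  set e := MeasurableEquiv.piFinSuccAbove (fun _ : Fin (n+1) => Bool × ℝ) i with he
  have hmp : MeasurePreserving e.symm
      (ν.prod (Measure.pi fun _ : Fin n => ν)) (Measure.pi fun _ : Fin (n+1) => ν) :=
    (measurePreserving_piFinSuccAbove (fun _ : Fin (n+1) => ν) i).symm e
  have hSm : MeasurableSet (Sset (n+1) t i k) := measurableSet_Sset t i k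
  have hpre : e.symm ⁻¹' (Sset (n+1) t i k)
      = ({y : Bool × ℝ | y.1 = false ∧ y.2 ≤ t k}) ×ˢ (Gout t i ⁻¹' {k}) := by
    ext yz
    obtain ⟨y, z⟩ := yz
    have hesymm : e.symm (y, z) = i.insertNth y z := by
      simp [he, MeasurableEquiv.piFinSuccAbove_symm_apply, Fin.insertNthEquiv]
    simp only [Set.mem_preimage, hesymm, Sset, Set.mem_setOf_eq, Set.mem_prod,
      Set.mem_singleton_iff, Fin.insertNth_apply_same]
    rw [update_insertNth_eq]
    exact Iff.rfl
  have hmeas := hmp.measure_preimage hSm.nullMeasurableSet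
  rw [modelM, ← hν, ← hmeas, hpre, Measure.prod_prod, coordM_false_Iic μ1 h0 h1, mul_assoc]

lemma sum_measure_Gout [IsProbabilityMeasure μ1] [IsProbabilityMeasure (coordM pi0 μ1)]
    (i : Fin (n+1)) (hnn : 0 ≤ t 1) :
    ∑ k ∈ Finset.Icc 1 (n+1),
        (Measure.pi fun _ : Fin n => coordM pi0 μ1) (Gout t i ⁻¹' {k}) = 1 := by
  have hdisj : (Finset.Icc 1 (n+1) : Set ℕ).PairwiseDisjoint
      (fun k => Gout t i ⁻¹' {k}) := by
    intro a _ b _ hab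
    apply Set.disjoint_left.mpr
    intro z hz hz'
    simp only [Set.mem_preimage, Set.mem_singleton_iff] at hz hz'
    exact hab (hz ▸ hz')
  have hmeas : ∀ k ∈ Finset.Icc 1 (n+1), MeasurableSet (Gout t i ⁻¹' {k}) :=
    fun k _ => (measurable_Gout t i) (measurableSet_singleton k)
  rw [← measure_biUnion_finset hdisj hmeas]
  have hcover : (⋃ k ∈ Finset.Icc 1 (n+1), Gout t i ⁻¹' {k}) = Set.univ := by
    ext z
    simp only [Set.mem_iUnion, Set.mem_preimage, Set.mem_singleton_iff, Set.mem_univ, iff_true]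
    exact ⟨Gout t i z, kSUf_update_mem (by omega) hnn, rfl⟩
  rw [hcover, measure_univ]

end Split

/-- In the unconditional independent model, the FDR of the linear step-up
(Benjamini–Hochberg) procedure with threshold `t_k = αk/m` equals `π₀ α`. -/
theorem FDR_LSU (m : ℕ) (hm : 2 ≤ m) (α : ℝ) (hα : α ∈ Set.Ioo (0:ℝ) 1)
    (pi0 : ℝ) (hpi0 : pi0 ∈ Set.Icc (0:ℝ) 1)
    (μ1 : Measure ℝ) [IsProbabilityMeasure μ1] (hsupp : μ1 (Set.Icc 0 1) = 1)
    (hF1c : Continuous (fun s => (μ1 (Set.Iic s)).toReal)) :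
    (∫ ω, (V0SU m (fun k => α * k / m) ω : ℝ)
        / max ((rejSUf m (fun k => α * k / m) (pvals m ω)).card : ℝ) 1
        ∂(modelM m pi0 μ1))
      = pi0 * α := by
  obtain ⟨n, rfl⟩ : ∃ n, m = n + 1 := ⟨m - 1, by omega⟩
  obtain ⟨hα0, hα1⟩ := hα
  set t : ℕ → ℝ := fun k => α * k / ((n+1 : ℕ) : ℝ) with ht
  have hNpos : (0:ℝ) < ((n+1:ℕ):ℝ) := by positivity
  have htmono : Monotone t := by
    intro a b hab
    simp only [ht]
    gcongr

  have htnn : ∀ j, 0 ≤ t j := by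
    intro j
    simp only [ht]
    positivity
  have htpos : ∀ k, 1 ≤ k → 0 < t k := by
    intro k hk
    simp only [ht]
    have : (0:ℝ) < (k:ℝ) := by exact_mod_cast hk
    positivity
  have htlt1 : ∀ k, k ≤ n+1 → t k < 1 := by
    intro k hk
    simp only [ht]
    have hkle : (k:ℝ) ≤ ((n+1:ℕ):ℝ) := by exact_mod_cast hk
    have : α * (k:ℝ) / ((n+1:ℕ):ℝ) ≤ α := by
      rw [div_le_iff₀ hNpos]
      nlinarith
    linarith
  haveI hcp : IsProbabilityMeasure (coordM pi0 μ1) := coordM_prob hpi0.1 hpi0.2 μ1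
  haveI : IsProbabilityMeasure (modelM (n+1) pi0 μ1) := by
    rw [modelM]; infer_instance
  haveI : IsProbabilityMeasure (Measure.pi fun _ : Fin n => coordM pi0 μ1) := by
    infer_instance
  have hint : ∀ (i : Fin (n+1)) (k : ℕ),
      Integrable (Set.indicator (Sset (n+1) t i k) (fun _ => (1:ℝ)/k))
        (modelM (n+1) pi0 μ1) :=
    fun i k => (integrable_const ((1:ℝ)/k)).indicator (measurableSet_Sset t i k)
  have hq1 : ∀ i : Fin (n+1), ∑ k ∈ Finset.Icc 1 (n+1),
      ((Measure.pi fun _ : Fin n => coordM pi0 μ1) (Gout t i ⁻¹' {k})).toReal = 1 := by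
    intro i
    rw [← ENNReal.toReal_sum (fun k _ => measure_ne_top _ _),
      sum_measure_Gout t pi0 μ1 i (htnn 1)]
    simp
  calc (∫ ω, (V0SU (n+1) t ω : ℝ)
        / max ((rejSUf (n+1) t (pvals (n+1) ω)).card : ℝ) 1 ∂(modelM (n+1) pi0 μ1))
      = ∫ ω, (∑ i : Fin (n+1), ∑ k ∈ Finset.Icc 1 (n+1),
          Set.indicator (Sset (n+1) t i k) (fun _ => (1:ℝ)/k) ω) ∂(modelM (n+1) pi0 μ1) := by
        apply integral_congr_ae
        filter_upwards with ω
        exact pointwise_FDP htmono htnn ω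
    _ = ∑ i : Fin (n+1), ∑ k ∈ Finset.Icc 1 (n+1),
          ∫ ω, Set.indicator (Sset (n+1) t i k) (fun _ => (1:ℝ)/k) ω
            ∂(modelM (n+1) pi0 μ1) := by
        rw [integral_finset_sum _ (fun i _ => integrable_finset_sum _ (fun k _ => hint i k))]
        exact Finset.sum_congr rfl (fun i _ => integral_finset_sum _ (fun k _ => hint i k))
    _ = ∑ i : Fin (n+1), ∑ k ∈ Finset.Icc 1 (n+1),
          ((modelM (n+1) pi0 μ1) (Sset (n+1) t i k)).toReal • ((1:ℝ)/k) := by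
        refine Finset.sum_congr rfl (fun i _ => Finset.sum_congr rfl (fun k _ => ?_))
        exact integral_indicator_const ((1:ℝ)/k) (measurableSet_Sset t i k)
    _ = ∑ i : Fin (n+1), (pi0 * α / ((n+1:ℕ):ℝ)) := by
        refine Finset.sum_congr rfl (fun i _ => ?_)
        have hterm : ∀ k ∈ Finset.Icc 1 (n+1),
            ((modelM (n+1) pi0 μ1) (Sset (n+1) t i k)).toReal • ((1:ℝ)/k)
              = (pi0 * α / ((n+1:ℕ):ℝ))
                * ((Measure.pi fun _ : Fin n => coordM pi0 μ1) (Gout t i ⁻¹' {k})).toReal := by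
          intro k hk
          rw [Finset.mem_Icc] at hk
          rw [measure_Sset_eq t pi0 μ1 i k (htpos k hk.1) (htlt1 k hk.2),
            ENNReal.toReal_mul, ENNReal.toReal_mul, ENNReal.toReal_ofReal hpi0.1,
            ENNReal.toReal_ofReal (htnn k), smul_eq_mul]
          have hk0 : (k:ℝ) ≠ 0 := Nat.cast_ne_zero.mpr (by omega)
          have hN0 : ((n+1:ℕ):ℝ) ≠ 0 := ne_of_gt hNpos
          simp only [ht]
          field_simp
        rw [Finset.sum_congr rfl hterm, ← Finset.mul_sum, hq1 i, mul_one]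
    _ = pi0 * α := by
        rw [Finset.sum_const, Finset.card_univ, Fintype.card_fin, nsmul_eq_mul]
        field_simp
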